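/- The presented group with generators x₁, x₂, x₃, x₄ and defining relations (x₃x₄)⁴ = (x₄x₃)⁴, x₂ = x₄x₃x₄x₃x₄⁻¹x₃⁻¹x₄⁻¹, x₁ = x₄x₃x₄x₃⁻¹x₄⁻¹, x₂ = x₃, x₁ = x₃⁻¹x₄x₃, and x₄x₃x₂x₁ = e is isomorphic to the presented group ⟨a₁, a₂ | (a₁a₂)² = e⟩. -/

import Mathlib

/-- Generators: `x₁, x₂, x₃, x₄` are `x 0, x 1, x 2, x 3`. -/
private def x : Fin 4 → FreeGroup (Fin 4) := FreeGroup.of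

/-- The relators of the presentation of `π₁` of the complement of the arrangement `ℬ₂`:
`(x₃x₄)⁴ = (x₄x₃)⁴`, `x₂ = x₄x₃x₄x₃x₄⁻¹x₃⁻¹x₄⁻¹`, `x₁ = x₄x₃x₄x₃⁻¹x₄⁻¹`, `x₂ = x₃`,
`x₁ = x₃⁻¹x₄x₃`, `x₄x₃x₂x₁ = e`. -/
def relsB2vk : Set (FreeGroup (Fin 4)) :=
  { (x 2 * x 3) ^ 4 * ((x 3 * x 2) ^ 4)⁻¹,
    x 1 * (x 3 * x 2 * x 3 * x 2 * (x 3)⁻¹ * (x 2)⁻¹ * (x 3)⁻¹)⁻¹,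
    x 0 * (x 3 * x 2 * x 3 * (x 2)⁻¹ * (x 3)⁻¹)⁻¹,
    x 1 * (x 2)⁻¹,
    x 0 * ((x 2)⁻¹ * x 3 * x 2)⁻¹,
    x 3 * x 2 * x 1 * x 0 }

/-- The target presentation `⟨a₁, a₂ | (a₁a₂)² = e⟩`. -/
def relA2 : Set (FreeGroup (Fin 2)) :=
  {(FreeGroup.of 0 * FreeGroup.of 1) ^ 2}

section Aux

private lemma rel_one {α : Type*} {rels : Set (FreeGroup α)} {r : FreeGroup α} (h : r ∈ rels) :
    (PresentedGroup.mk rels r : PresentedGroup rels) = 1 :=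
  (QuotientGroup.eq_one_iff _).mpr (Subgroup.subset_normalClosure h)

section grp
variable {G : Type*} [Group G] {a b : G} (h : a * b * (a * b) = 1)

include h

private lemma c1 : a * b * a = b⁻¹ := by
  rw [← mul_assoc] at h; exact mul_eq_one_iff_eq_inv.mp h

private lemma c2 : a⁻¹ * b⁻¹ * a⁻¹ = b := by
  have h1 := c1 h
  calc a⁻¹ * b⁻¹ * a⁻¹ = (a * b * a)⁻¹ := by group
    _ = b⁻¹⁻¹ := by rw [h1]
    _ = b := inv_inv b

private lemma c3 : (b * a) ^ 4 * ((a * b) ^ 4)⁻¹ = 1 := by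
  have h2 : (a*b)*(a*b) = 1 := by simpa [mul_assoc] using h
  have h2' : (b*a)*(b*a) = 1 := by
    have e : (b*a)*(b*a) = a⁻¹ * ((a*b)*(a*b)) * a := by group
    rw [e, h2]; group
  have e4 : (a*b)^4 = (a*b)*(a*b)*((a*b)*(a*b)) := by simp [pow_succ, mul_assoc]
  have e4' : (b*a)^4 = (b*a)*(b*a)*((b*a)*(b*a)) := by simp [pow_succ, mul_assoc]
  rw [e4, e4', h2, h2']; group

private lemma c4 : b * (a * b * a * b * a⁻¹ * b⁻¹ * a⁻¹)⁻¹ = 1 := by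
  have h1 := c1 h
  have h2 := c2 h
  have e : a * b * a * b * a⁻¹ * b⁻¹ * a⁻¹ = b := by
    calc a * b * a * b * a⁻¹ * b⁻¹ * a⁻¹ = (a*b*a) * (b * (a⁻¹ * b⁻¹ * a⁻¹)) := by group
      _ = b⁻¹ * (b * b) := by rw [h1, h2]
      _ = b := by group
  rw [e, mul_inv_cancel]

private lemma c5 : b⁻¹ * a * b * (a * b * a * b⁻¹ * a⁻¹)⁻¹ = 1 := by
  have h1 := c1 h
  have e : a * b * a * b⁻¹ * a⁻¹ = b⁻¹ * (b⁻¹ * a⁻¹) := by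
    calc a * b * a * b⁻¹ * a⁻¹ = (a*b*a) * (b⁻¹ * a⁻¹) := by group
      _ = _ := by rw [h1]
  rw [e]
  calc b⁻¹ * a * b * (b⁻¹ * (b⁻¹ * a⁻¹))⁻¹
      = b⁻¹ * (a * b * (a * b)) * b := by group; simp [zpow_two, pow_two, mul_assoc]
    _ = 1 := by rw [h]; group

private lemma c6 : a * b * b * (b⁻¹ * a * b) = 1 := by
  calc a * b * b * (b⁻¹ * a * b) = a * b * (a * b) := by group
    _ = 1 := h

end grp

private noncomputable def A : PresentedGroup relA2 := PresentedGroup.of 0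
private noncomputable def B : PresentedGroup relA2 := PresentedGroup.of 1

private noncomputable def X (i : Fin 4) : PresentedGroup relsB2vk := PresentedGroup.of i

private lemma hAB : A * B * (A * B) = 1 := by
  have := rel_one (rels := relA2) (r := (FreeGroup.of 0 * FreeGroup.of 1) ^ 2) rfl
  have e : (FreeGroup.of 0 * FreeGroup.of 1 : FreeGroup (Fin 2)) ^ 2
      = FreeGroup.of 0 * FreeGroup.of 1 * (FreeGroup.of 0 * FreeGroup.of 1) := by
    rw [pow_two]
  rw [e] at this
  simpa [A, B, PresentedGroup.of] using this

private noncomputable def φf : Fin 4 → PresentedGroup relA2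
  | 0 => B⁻¹ * A * B
  | 1 => B
  | 2 => B
  | 3 => A

private lemma hφ : ∀ r ∈ relsB2vk, FreeGroup.lift φf r = 1 := by
  intro r hr
  have hab := hAB
  rcases hr with rfl | rfl | rfl | rfl | rfl | rfl <;>
    simp only [x, map_mul, map_inv, map_pow, FreeGroup.lift_apply_of, φf]
  · exact c3 hab
  · exact c4 hab
  · exact c5 hab
  · exact mul_inv_cancel B
  · exact mul_inv_cancel _
  · exact c6 hab

private noncomputable def ψf : Fin 2 → PresentedGroup relsB2vk
  | 0 => X 3
  | 1 => X 2

private lemma r4 : X 1 = X 2 := by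
  have := rel_one (rels := relsB2vk) (r := x 1 * (x 2)⁻¹) (by simp [relsB2vk])
  simp only [x, map_mul, map_inv, X, PresentedGroup.of] at this ⊢
  exact mul_inv_eq_one.mp this

private lemma r5 : X 0 = (X 2)⁻¹ * X 3 * X 2 := by
  have := rel_one (rels := relsB2vk) (r := x 0 * ((x 2)⁻¹ * x 3 * x 2)⁻¹) (by simp [relsB2vk])
  simp only [x, map_mul, map_inv, X, PresentedGroup.of] at this ⊢
  exact mul_inv_eq_one.mp this

private lemma r6 : X 3 * X 2 * X 1 * X 0 = 1 := by
  have := rel_one (rels := relsB2vk) (r := x 3 * x 2 * x 1 * x 0) (by simp [relsB2vk])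
  simpa only [x, map_mul, X, PresentedGroup.of] using this

private lemma hX32 : X 3 * X 2 * (X 3 * X 2) = 1 := by
  calc X 3 * X 2 * (X 3 * X 2) = X 3 * X 2 * X 2 * ((X 2)⁻¹ * X 3 * X 2) := by group
    _ = X 3 * X 2 * X 1 * X 0 := by rw [r4, r5]
    _ = 1 := r6

private lemma hψ : ∀ r ∈ relA2, FreeGroup.lift ψf r = 1 := by
  intro r hr
  rcases hr with rfl
  simp only [map_mul, map_pow, FreeGroup.lift_apply_of, ψf]
  rw [pow_two]
  exact hX32

end Aux

theorem presentation_B2 :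
    Nonempty (PresentedGroup relsB2vk ≃* PresentedGroup relA2) := by
  let φ : PresentedGroup relsB2vk →* PresentedGroup relA2 := PresentedGroup.toGroup hφ
  let ψ : PresentedGroup relA2 →* PresentedGroup relsB2vk := PresentedGroup.toGroup hψ
  have hψφ : ψ.comp φ = MonoidHom.id _ := by
    apply PresentedGroup.ext
    intro i
    fin_cases i
    · show ψ (φ (PresentedGroup.of 0)) = PresentedGroup.of 0
      rw [PresentedGroup.toGroup.of (f := φf)]
      show ψ (B⁻¹ * A * B) = _
      simp only [map_mul, map_inv, A, B]
      rw [PresentedGroup.toGroup.of (f := ψf), PresentedGroup.toGroup.of (f := ψf)]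
      show (X 2)⁻¹ * X 3 * X 2 = X 0
      exact r5.symm
    · show ψ (φ (PresentedGroup.of 1)) = PresentedGroup.of 1
      rw [PresentedGroup.toGroup.of (f := φf)]
      show ψ B = _
      rw [B, PresentedGroup.toGroup.of (f := ψf)]
      show X 2 = X 1
      exact r4.symm
    · show ψ (φ (PresentedGroup.of 2)) = PresentedGroup.of 2
      rw [PresentedGroup.toGroup.of (f := φf)]
      show ψ B = _
      rw [B, PresentedGroup.toGroup.of (f := ψf)]
      rfl
    · show ψ (φ (PresentedGroup.of 3)) = PresentedGroup.of 3
      rw [PresentedGroup.toGroup.of (f := φf)]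
      show ψ A = _
      rw [A, PresentedGroup.toGroup.of (f := ψf)]
      rfl
  have hφψ : φ.comp ψ = MonoidHom.id _ := by
    apply PresentedGroup.ext
    intro i
    fin_cases i
    · show φ (ψ (PresentedGroup.of 0)) = PresentedGroup.of 0
      rw [PresentedGroup.toGroup.of (f := ψf)]
      show φ (X 3) = _
      rw [X, PresentedGroup.toGroup.of (f := φf)]
      rfl
    · show φ (ψ (PresentedGroup.of 1)) = PresentedGroup.of 1
      rw [PresentedGroup.toGroup.of (f := ψf)]
      show φ (X 2) = _
      rw [X, PresentedGroup.toGroup.of (f := φf)]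
      rfl
  exact ⟨{ toFun := φ, invFun := ψ,
           left_inv := fun g => congrArg (fun h => h g) (congrArg DFunLike.coe hψφ),
           right_inv := fun g => congrArg (fun h => h g) (congrArg DFunLike.coe hφψ),
           map_mul' := φ.map_mul }⟩
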